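/- The assignment Z_n ↦ Σ_{r_1+...+r_m = n} U_{r_1} U_{r_2} ... U_{r_m} / m! (sum over compositions of n) defines an isomorphism of bialgebras from NSymm ⊗ Q to LieHopf ⊗ Q, with inverse given by U_n ↦ Σ_{r_1+...+r_m = n} (-1)^{m+1} Z_{r_1} Z_{r_2} ... Z_{r_m} / m. -/

import Mathlib

open TensorProduct

/-- `NSymmQ = NSymm ⊗ ℚ` is the free associative algebra `ℚ⟨Z_1, Z_2, ...⟩`. -/
noncomputable abbrev NSymmQ : Type := FreeAlgebra ℚ ℕ

/-- `LieHopfQ = LieHopf ⊗ ℚ` is the free associative algebra `ℚ⟨U_1, U_2, ...⟩`. -/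
noncomputable abbrev LieHopfQ : Type := FreeAlgebra ℚ ℕ

/-- `Z 0 = 1` and `Z (n+1)` is the generator `Z_{n+1}` of `NSymmQ`. -/
noncomputable def Z : ℕ → NSymmQ
  | 0 => 1
  | n + 1 => FreeAlgebra.ι ℚ n

/-- `U 0 = 0` and `U (n+1)` is the generator `U_{n+1}` of `LieHopfQ`. -/
noncomputable def U : ℕ → LieHopfQ
  | 0 => 0
  | n + 1 => FreeAlgebra.ι ℚ n

/-- The comultiplication of `NSymmQ`: `μ(Z_n) = Σ_{i+j=n} Z_i ⊗ Z_j`. -/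
noncomputable def muN : NSymmQ →ₐ[ℚ] NSymmQ ⊗[ℚ] NSymmQ :=
  FreeAlgebra.lift ℚ fun n => ∑ i ∈ Finset.range (n + 2), Z i ⊗ₜ[ℚ] Z (n + 1 - i)

/-- The comultiplication of `LieHopfQ`: all `U_n` are primitive. -/
noncomputable def muL : LieHopfQ →ₐ[ℚ] LieHopfQ ⊗[ℚ] LieHopfQ :=
  FreeAlgebra.lift ℚ fun n =>
    FreeAlgebra.ι ℚ n ⊗ₜ[ℚ] 1 + 1 ⊗ₜ[ℚ] FreeAlgebra.ι ℚ n

/-- The counit of `NSymmQ`: `ε(Z_n) = 0` for `n ≥ 1`. -/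
noncomputable def epsN : NSymmQ →ₐ[ℚ] ℚ := FreeAlgebra.lift ℚ fun _ => (0 : ℚ)

/-- The counit of `LieHopfQ`: `ε(U_n) = 0`. -/
noncomputable def epsL : LieHopfQ →ₐ[ℚ] ℚ := FreeAlgebra.lift ℚ fun _ => (0 : ℚ)

namespace Stmt13

universe u
variable {A : Type u} [Ring A] [Algebra ℚ A]

/-- list product of pointwise smul -/
lemma prod_map_smul {α : Type*} (l : List α) (σ : α → ℚ) (x : α → A) :
    (l.map fun a => σ a • x a).prod = (l.map σ).prod • (l.map x).prod := by
  induction l with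
  | nil => simp
  | cons a t ih =>
    simp only [List.map_cons, List.prod_cons, ih, mul_smul, smul_mul_assoc, mul_smul_comm]
    rw [smul_comm]

/-- distribute an ordered (noncommutative) product of sums -/
lemma prod_ofFn_sum {L : ℕ} (α : Fin L → Type*) [∀ i, Fintype (α i)]
    (f : ∀ i, α i → A) :
    (List.ofFn fun i => ∑ a : α i, f i a).prod
      = ∑ p : (∀ i, α i), (List.ofFn fun i => f i (p i)).prod := by
  induction L with
  | zero =>
    simp only [List.ofFn_zero, List.prod_nil]
    haveI : Unique (∀ i : Fin 0, α i) := Pi.uniqueOfIsEmpty α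
    rw [Fintype.sum_unique]
  | succ L ih =>
    rw [List.ofFn_succ, List.prod_cons, Finset.sum_mul]
    rw [← Equiv.sum_comp (Fin.consEquiv α)]
    rw [Fintype.sum_prod_type]
    refine Finset.sum_congr rfl fun a _ => ?_
    rw [ih (fun i => α i.succ) (fun i x => f i.succ x), Finset.mul_sum]
    refine Finset.sum_congr rfl fun q _ => ?_
    rw [List.ofFn_succ, List.prod_cons]
    simp [Fin.consEquiv]

lemma comp_zero_blocks (c : Composition 0) : c.blocks = [] := by
  by_contra h
  rcases List.exists_mem_of_ne_nil _ h with ⟨x, hx⟩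
  have h1 : 0 < x := c.blocks_pos hx
  have h2 : x ≤ c.blocks.sum := List.single_le_sum (fun y hy => (c.blocks_pos hy).le) _ hx
  rw [c.blocks_sum] at h2
  omega

instance : Unique (Composition 0) where
  default := ⟨[], by simp, by simp⟩
  uniq c := by
    apply Composition.ext
    simp [comp_zero_blocks]

/-- first-block decomposition of a sum over compositions -/
lemma sum_composition_succ {M : Type*} [AddCommMonoid M] (F : List ℕ → M) (n : ℕ) :
    ∑ c : Composition (n+1), F c.blocks
      = ∑ j ∈ Finset.range (n+1), ∑ c : Composition (n - j), F ((j+1) :: c.blocks) := by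
  classical
  let e : ∀ (j : Fin (n+1)) (c : Composition (n - (j:ℕ))), Composition (n+1) := fun j c =>
    ⟨(j+1) :: c.blocks,
     by intro i hi
        rcases List.mem_cons.1 hi with h | h
        · omega
        · exact c.blocks_pos h,
     by simp [c.blocks_sum]; omega⟩
  rw [Finset.sum_range fun j => _]
  rw [← Finset.sum_sigma (Finset.univ : Finset (Fin (n+1)))
    (fun j => (Finset.univ : Finset (Composition (n - (j:ℕ)))))
    (fun x => F (((x.1:ℕ)+1) :: x.2.blocks))]
  symm
  apply Finset.sum_bij (fun x _ => e x.1 x.2)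
  · intro x _; exact Finset.mem_univ _
  · intro x hx y hy hxy
    have hb : ((x.1:ℕ)+1) :: x.2.blocks = ((y.1:ℕ)+1) :: y.2.blocks :=
      congrArg Composition.blocks hxy
    have h1 : x.1 = y.1 := by
      have := List.head_eq_of_cons_eq hb; ext; omega
    rcases x with ⟨j, c⟩; rcases y with ⟨j', c'⟩
    cases h1
    have h2 : c = c' := Composition.ext (List.tail_eq_of_cons_eq hb)
    rw [h2]
  · intro c _
    have hne : c.blocks ≠ [] := by
      intro h
      have := c.blocks_sum
      rw [h] at this; simp at this
    rcases List.exists_cons_of_ne_nil hne with ⟨b, t, hbt⟩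
    have hbpos : 0 < b := c.blocks_pos (by rw [hbt]; exact List.mem_cons_self)
    have hsum : b + t.sum = n + 1 := by
      have := c.blocks_sum; rw [hbt] at this; simpa using this
    have hble : b ≤ n + 1 := by omega
    refine ⟨⟨⟨b - 1, by omega⟩, ⟨t, ?_, ?_⟩⟩, Finset.mem_univ _, ?_⟩
    · intro i hi; exact c.blocks_pos (by rw [hbt]; exact List.mem_cons_of_mem _ hi)
    · simp only; omega
    · apply Composition.ext
      show (b - 1 + 1) :: t = c.blocks
      rw [hbt]
      congr 1
      omega
  · intro x _
    rfl

/-- weighted composition sum -/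
noncomputable def csum (w : ℕ → ℚ) (g : ℕ → A) (n : ℕ) : A :=
  ∑ c : Composition n, w c.length • (c.blocks.map g).prod

/-- composition sum restricted to a given length -/
noncomputable def lsum (g : ℕ → A) (n m : ℕ) : A :=
  ∑ c : Composition n, if c.length = m then (c.blocks.map g).prod else 0

lemma lsum_zero (g : ℕ → A) (m : ℕ) : lsum g 0 m = if m = 0 then 1 else 0 := by
  rw [lsum, Fintype.sum_unique]
  have : (default : Composition 0).length = 0 := by
    simp [Composition.length, comp_zero_blocks]
  rw [Composition.length, comp_zero_blocks]
  by_cases h : m = 0 <;> simp [h, eq_comm]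

lemma lsum_pos_len_zero (g : ℕ → A) (n : ℕ) : lsum g (n+1) 0 = 0 := by
  rw [lsum]
  apply Finset.sum_eq_zero
  intro c _
  have : c.length ≠ 0 := by
    intro h
    have hb : c.blocks = [] := List.length_eq_zero_iff.1 h
    have := c.blocks_sum
    rw [hb] at this; simp at this
  simp [this]

lemma lsum_eq_coeff_pow (g : ℕ → A) (hg : g 0 = 0) (n m : ℕ) :
    lsum g n m = PowerSeries.coeff (R := A) n ((PowerSeries.mk g) ^ m) := by
  induction m generalizing n with
  | zero =>
    rw [pow_zero, PowerSeries.coeff_one, lsum]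
    rcases n with _ | n
    · rw [Fintype.sum_unique]
      have : (default : Composition 0).length = 0 := by
        simp [Composition.length, comp_zero_blocks]
      simp [this, comp_zero_blocks]
    · rw [show (∑ c : Composition (n+1), if c.length = 0 then ((c.blocks.map g).prod) else 0)
          = lsum g (n+1) 0 from rfl, lsum_pos_len_zero g n]
      simp
  | succ m ih =>
    rw [pow_succ', PowerSeries.coeff_mul]
    rcases n with _ | k
    · simp only [Finset.Nat.antidiagonal_zero, Finset.sum_singleton, PowerSeries.coeff_mk,
        PowerSeries.coeff_zero_eq_constantCoeff]
      rw [hg, zero_mul, lsum_zero]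
      simp
    · rw [Finset.Nat.sum_antidiagonal_eq_sum_range_succ_mk]
      rw [Finset.sum_range_succ']
      simp only [PowerSeries.coeff_mk, hg, zero_mul, add_zero]
      have key := sum_composition_succ
        (fun bl => if bl.length = m + 1 then (bl.map g).prod else 0) k
      rw [lsum, key]
      refine Finset.sum_congr rfl fun j hj => ?_
      have hkj : k + 1 - (j + 1) = k - j := by omega
      rw [hkj, ← ih (k - j), lsum, Finset.mul_sum]
      refine Finset.sum_congr rfl fun c _ => ?_
      simp only [List.length_cons, List.map_cons, List.prod_cons, Composition.length]
      by_cases h : c.blocks.length = m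
      · simp [h]
      · simp [h]

lemma lsum_eq_zero_of_lt (g : ℕ → A) {n m : ℕ} (h : n < m) : lsum g n m = 0 := by
  apply Finset.sum_eq_zero
  intro c _
  have : c.length ≠ m := fun hc => absurd (hc ▸ c.length_le) (by omega)
  simp [this]

lemma csum_eq_sum_lsum (w : ℕ → ℚ) (g : ℕ → A) (n : ℕ) :
    csum w g n = ∑ m ∈ Finset.range (n+1), w m • lsum g n m := by
  rw [csum]
  simp only [lsum, Finset.smul_sum]
  rw [Finset.sum_comm]
  refine Finset.sum_congr rfl fun c _ => ?_
  have hmem : c.length ∈ Finset.range (n+1) := Finset.mem_range.2 (Nat.lt_succ_of_le c.length_le)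
  have : ∀ m ∈ Finset.range (n+1),
      (w m • if c.length = m then (c.blocks.map g).prod else 0)
        = if c.length = m then w m • (c.blocks.map g).prod else 0 := by
    intro m _; split <;> simp
  rw [Finset.sum_congr rfl this, Finset.sum_ite_eq, if_pos hmem]

lemma ofFn_getElem_map {β γ : Type*} (l : List β) (Φ : β → γ) (m : ℕ) (h : m = l.length) :
    (List.ofFn fun i : Fin m => Φ (l[(i:ℕ)]'(h ▸ i.isLt))) = l.map Φ := by
  subst h
  rw [show (fun i : Fin l.length => Φ (l[(i:ℕ)]'i.isLt)) = Φ ∘ (fun i : Fin l.length => l[(i:ℕ)])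
    from rfl, ← List.map_ofFn, List.ofFn_getElem]

/-- THE nesting lemma -/
lemma csum_csum (w v : ℕ → ℚ) (g : ℕ → A) (n : ℕ) :
    csum w (fun r => csum v g r) n
      = ∑ a : Composition n, (csum w v a.length) • (a.blocks.map g).prod := by
  classical
  rw [csum]
  have step1 : ∀ c : Composition n,
      w c.length • ((c.blocks.map fun r => csum v g r).prod)
        = ∑ p : (∀ i : Fin c.length, Composition (c.blocksFun i)),
            w c.length •
              (List.ofFn fun i => v (p i).length • (((p i).blocks.map g)).prod).prod := by
    intro c
    rw [← Composition.ofFn_blocksFun c, List.map_ofFn,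
      show ((fun r => csum v g r) ∘ c.blocksFun)
          = fun i => ∑ d : Composition (c.blocksFun i),
              v d.length • ((d.blocks.map g)).prod from rfl,
      prod_ofFn_sum (fun i => Composition (c.blocksFun i))
        (fun i d => v d.length • ((d.blocks.map g)).prod),
      Finset.smul_sum]
  rw [Finset.sum_congr rfl fun c _ => step1 c]
  rw [← Finset.sum_sigma (Finset.univ : Finset (Composition n))
      (fun c => (Finset.univ : Finset (∀ i : Fin c.length, Composition (c.blocksFun i))))
      (fun x => w x.1.length •
        (List.ofFn fun i => v (x.2 i).length • (((x.2 i).blocks.map g)).prod).prod),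
    Finset.univ_sigma_univ]
  rw [← Equiv.sum_comp (Composition.sigmaEquivSigmaPi n)
      (fun x : Σ c : Composition n, ∀ i : Fin c.length, Composition (c.blocksFun i) =>
        w x.1.length •
          (List.ofFn fun i => v (x.2 i).length • (((x.2 i).blocks.map g)).prod).prod)]
  rw [← Finset.univ_sigma_univ, Finset.sum_sigma]
  refine Finset.sum_congr rfl fun a _ => ?_
  rw [csum, Finset.sum_smul]
  refine Finset.sum_congr rfl fun b _ => ?_
  set ll := a.blocks.splitWrtComposition b with hll
  have hlen : (a.gather b).length = ll.length := by
    rw [Composition.length_gather, hll, List.length_splitWrtComposition]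
  have hblocks : ∀ i : Fin ((a.gather b).length),
      (a.sigmaCompositionAux b i).blocks = ll[(i:ℕ)]'(hlen ▸ i.isLt) := fun i => rfl
  show w (a.gather b).length •
      (List.ofFn fun i => v (a.sigmaCompositionAux b i).length •
        (((a.sigmaCompositionAux b i).blocks.map g)).prod).prod
    = (w b.length • (b.blocks.map v).prod) • (a.blocks.map g).prod
  have step2 : (List.ofFn fun i : Fin ((a.gather b).length) =>
      v (a.sigmaCompositionAux b i).length •
        (((a.sigmaCompositionAux b i).blocks.map g)).prod)
      = ll.map fun bl => v bl.length • ((bl.map g)).prod := by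
    have := ofFn_getElem_map (γ := A) ll
      (fun bl => v bl.length • ((bl.map g)).prod) ((a.gather b).length) hlen
    rw [← this]
    rfl
  rw [step2, prod_map_smul ll (fun bl => (v bl.length : ℚ)) (fun bl => (bl.map g).prod)]
  have f1 : (ll.map fun bl => (v bl.length : ℚ)).prod = (b.blocks.map v).prod := by
    rw [show (ll.map fun bl => (v bl.length : ℚ)) = (ll.map List.length).map v by
      rw [List.map_map]; rfl]
    congr 1
    rw [hll]
    exact congrArg (List.map v) (List.map_length_splitWrtComposition a.blocks b)
  have f2 : (ll.map fun bl => ((bl.map g)).prod).prod = (a.blocks.map g).prod := by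
    rw [show (ll.map fun bl => ((bl.map g)).prod) = (ll.map (List.map g)).map List.prod by
      rw [List.map_map]; rfl]
    rw [← List.prod_flatten, ← List.map_flatten, hll,
      List.flatten_splitWrtComposition]
  rw [f1, f2, Composition.length_gather, smul_smul, smul_eq_mul]



/-! ### Scalar identities -/

noncomputable def wfact : ℕ → ℚ := fun m => (m.factorial : ℚ)⁻¹
noncomputable def wlog : ℕ → ℚ := fun m => (-1 : ℚ) ^ (m + 1) / m
noncomputable def vexp : ℕ → ℚ := fun m => if m = 0 then 0 else (m.factorial : ℚ)⁻¹

lemma wlog_zero : wlog 0 = 0 := by simp [wlog]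
lemma vexp_zero : vexp 0 = 0 := by simp [vexp]
lemma wfact_zero : wfact 0 = 1 := by simp [wfact]
lemma wlog_one : wlog 1 = 1 := by simp [wlog]

noncomputable def VA : PowerSeries ℚ := PowerSeries.mk wlog
noncomputable def VB : PowerSeries ℚ := PowerSeries.mk vexp

noncomputable def sA (k m : ℕ) : ℚ := PowerSeries.coeff (R := ℚ) k (VA ^ m)
noncomputable def sB (k m : ℕ) : ℚ := PowerSeries.coeff (R := ℚ) k (VB ^ m)

lemma sA_vanish {k m : ℕ} (h : k < m) : sA k m = 0 := by
  rw [sA, VA, ← lsum_eq_coeff_pow wlog wlog_zero]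
  exact lsum_eq_zero_of_lt wlog h

lemma sB_vanish {k m : ℕ} (h : k < m) : sB k m = 0 := by
  rw [sB, VB, ← lsum_eq_coeff_pow vexp vexp_zero]
  exact lsum_eq_zero_of_lt vexp h

lemma sA_zero (k : ℕ) : sA k 0 = if k = 0 then 1 else 0 := by
  rw [sA, pow_zero, PowerSeries.coeff_one]

lemma sB_zero (k : ℕ) : sB k 0 = if k = 0 then 1 else 0 := by
  rw [sB, pow_zero, PowerSeries.coeff_one]

lemma dVB : PowerSeries.derivative ℚ VB = VB + 1 := by
  ext n
  rw [PowerSeries.coeff_derivative, map_add, VB, PowerSeries.coeff_mk, PowerSeries.coeff_mk,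
    PowerSeries.coeff_one]
  rcases n with _ | n
  · simp [vexp]
  · have h1 : vexp (n + 1 + 1) = ((n+2).factorial : ℚ)⁻¹ := by simp [vexp]
    have h2 : vexp (n + 1) = ((n+1).factorial : ℚ)⁻¹ := by simp [vexp]
    rw [h1, h2]
    have h3 : ((n+2).factorial : ℚ) = (n + 2) * ((n+1).factorial : ℚ) := by
      rw [show n + 2 = (n+1) + 1 from rfl, Nat.factorial_succ]
      push_cast; ring
    have h4 : ((n+1).factorial : ℚ) ≠ 0 := Nat.cast_ne_zero.2 (Nat.factorial_ne_zero _)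
    have h5 : ((n : ℚ) + 1 + 1) ≠ 0 := by positivity
    rw [h3]
    simp only [Nat.succ_ne_zero, if_false, add_zero, mul_inv]
    have h6 : ((n:ℚ) + 2) ≠ 0 := by positivity
    rw [show ((n + 1 : ℕ) : ℚ) + 1 = (n:ℚ) + 2 by push_cast; ring]
    field_simp

lemma dVA : (1 + PowerSeries.X) * PowerSeries.derivative ℚ VA = 1 := by
  ext n
  rw [add_mul, one_mul, map_add]
  rcases n with _ | n
  · have e1 : (PowerSeries.coeff (R := ℚ) 0) (PowerSeries.derivative ℚ VA) = wlog 1 * 1 := by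
      rw [PowerSeries.coeff_derivative, VA, PowerSeries.coeff_mk]
      push_cast; ring
    have e2 : (PowerSeries.coeff (R := ℚ) 0) (PowerSeries.X * PowerSeries.derivative ℚ VA) = 0 := by
      rw [PowerSeries.coeff_zero_eq_constantCoeff, map_mul]
      simp
    rw [e1, e2, wlog_one, PowerSeries.coeff_one]
    simp
  · rw [PowerSeries.coeff_succ_X_mul, PowerSeries.coeff_derivative, PowerSeries.coeff_derivative,
      PowerSeries.coeff_one, VA, PowerSeries.coeff_mk, PowerSeries.coeff_mk]
    simp only [Nat.succ_ne_zero, if_false]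
    rw [wlog, wlog]
    have h1 : ((n + 1 : ℕ) : ℚ) + 1 ≠ 0 := by push_cast; positivity
    have h2 : ((n : ℕ) : ℚ) + 1 ≠ 0 := by positivity
    push_cast
    field_simp
    ring

lemma sB_rec (k m : ℕ) :
    ((k:ℚ)+1) * sB (k+1) (m+1) = ((m:ℚ)+1) * (sB k (m+1) + sB k m) := by
  have hD : PowerSeries.derivative ℚ (VB ^ (m+1))
      = (m+1 : ℕ) • (VB ^ (m+1) + VB ^ m) := by
    rw [Derivation.leibniz_pow, Nat.add_sub_cancel, dVB, smul_eq_mul, mul_add, mul_one,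
      ← pow_succ]
  have := congrArg (PowerSeries.coeff (R := ℚ) k) hD
  rw [PowerSeries.coeff_derivative, map_nsmul, map_add] at this
  rw [sB, sB, sB]
  push_cast at this ⊢
  rw [mul_comm]
  rw [this]
  ring

lemma sA_rec (k m : ℕ) :
    ((k:ℚ)+1) * sA (k+1) (m+1) + (k:ℚ) * sA k (m+1) = ((m:ℚ)+1) * sA k m := by
  have hD : (1 + PowerSeries.X) * PowerSeries.derivative ℚ (VA ^ (m+1))
      = (m+1 : ℕ) • VA ^ m := by
    rw [Derivation.leibniz_pow, Nat.add_sub_cancel, smul_eq_mul, mul_smul_comm,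
      mul_left_comm, dVA, mul_one]
  have h2 := congrArg (PowerSeries.coeff (R := ℚ) k) hD
  rw [add_mul, one_mul, map_add, map_nsmul, PowerSeries.coeff_derivative] at h2
  have h3 : (PowerSeries.coeff (R := ℚ) k) (PowerSeries.X * PowerSeries.derivative ℚ (VA ^ (m+1)))
      = (PowerSeries.coeff (R := ℚ) k) (VA ^ (m+1)) * k := by
    rcases k with _ | j
    · rw [PowerSeries.coeff_zero_eq_constantCoeff, map_mul]
      simp
    · rw [PowerSeries.coeff_succ_X_mul, PowerSeries.coeff_derivative]
      push_cast; ring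
  rw [h3, nsmul_eq_mul] at h2
  rw [sA, sA, sA]
  push_cast at h2 ⊢
  calc ((k:ℚ)+1) * (PowerSeries.coeff (R := ℚ) (k+1)) (VA ^ (m+1)) + (k:ℚ) * (PowerSeries.coeff (R := ℚ) k) (VA ^ (m+1))
      = (PowerSeries.coeff (R := ℚ) (k + 1)) (VA ^ (m + 1)) * ((k:ℚ) + 1)
        + (PowerSeries.coeff (R := ℚ) k) (VA ^ (m+1)) * (k:ℚ) := by ring
    _ = ((m:ℚ) + 1) * (PowerSeries.coeff (R := ℚ) k) (VA ^ m) := h2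

noncomputable def kA : ℕ → ℚ := csum wfact wlog
noncomputable def kB : ℕ → ℚ := csum wlog vexp

lemma kA_eq_sum (k : ℕ) : kA k = ∑ m ∈ Finset.range (k+1), wfact m * sA k m := by
  rw [kA, csum_eq_sum_lsum]
  refine Finset.sum_congr rfl fun m _ => ?_
  rw [lsum_eq_coeff_pow wlog wlog_zero, smul_eq_mul, sA, VA]

lemma kB_eq_sum (k : ℕ) : kB k = ∑ m ∈ Finset.range (k+1), wlog m * sB k m := by
  rw [kB, csum_eq_sum_lsum]
  refine Finset.sum_congr rfl fun m _ => ?_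
  rw [lsum_eq_coeff_pow vexp vexp_zero, smul_eq_mul, sB, VB]

lemma kA_zero : kA 0 = 1 := by
  rw [kA_eq_sum]
  simp [sA_zero, wfact_zero]

lemma kA_one : kA 1 = 1 := by
  rw [kA_eq_sum]
  rw [Finset.sum_range_succ, Finset.sum_range_one]
  rw [sA_zero]
  simp only [one_ne_zero, if_false, mul_zero, zero_add]
  rw [show sA 1 1 = wlog 1 by rw [sA, pow_one, VA, PowerSeries.coeff_mk], wlog_one]
  simp [wfact]

lemma kB_one : kB 1 = 1 := by
  rw [kB_eq_sum]
  rw [Finset.sum_range_succ, Finset.sum_range_one]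
  rw [sB_zero]
  simp only [one_ne_zero, if_false, mul_zero, zero_add]
  rw [show sB 1 1 = vexp 1 by rw [sB, pow_one, VB, PowerSeries.coeff_mk], wlog_one]
  simp [vexp]

lemma kA_rec (K : ℕ) (hK : 1 ≤ K) :
    ((K:ℚ)+1) * kA (K+1) = (1 - (K:ℚ)) * kA K := by
  rw [kA_eq_sum, Finset.mul_sum]
  rw [Finset.sum_range_succ' (fun m => ((K:ℚ)+1) * (wfact m * sA (K+1) m))]
  rw [show sA (K+1) 0 = 0 by rw [sA_zero]; simp, mul_zero, mul_zero, add_zero]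
  have step : ∀ M, ((K:ℚ)+1) * (wfact (M+1) * sA (K+1) (M+1))
      = wfact M * sA K M - (K:ℚ) * (wfact (M+1) * sA K (M+1)) := by
    intro M
    have h := sA_rec K M
    have hw : wfact (M+1) * ((M:ℚ)+1) = wfact M := by
      rw [wfact, wfact, Nat.factorial_succ]
      have : ((M+1).factorial : ℚ) ≠ 0 := Nat.cast_ne_zero.2 (Nat.factorial_ne_zero _)
      push_cast
      field_simp
    have : ((K:ℚ)+1) * sA (K+1) (M+1) = ((M:ℚ)+1) * sA K M - (K:ℚ) * sA K (M+1) := by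
      linarith [h]
    calc ((K:ℚ)+1) * (wfact (M+1) * sA (K+1) (M+1))
        = wfact (M+1) * (((K:ℚ)+1) * sA (K+1) (M+1)) := by ring
      _ = wfact (M+1) * (((M:ℚ)+1) * sA K M - (K:ℚ) * sA K (M+1)) := by rw [this]
      _ = (wfact (M+1) * ((M:ℚ)+1)) * sA K M - (K:ℚ) * (wfact (M+1) * sA K (M+1)) := by ring
      _ = wfact M * sA K M - (K:ℚ) * (wfact (M+1) * sA K (M+1)) := by rw [hw]
  rw [Finset.sum_congr rfl fun M _ => step M, Finset.sum_sub_distrib, ← Finset.mul_sum]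
  have e1 : ∑ M ∈ Finset.range (K+1), wfact M * sA K M = kA K := (kA_eq_sum K).symm
  have e2 : ∑ M ∈ Finset.range (K+1), wfact (M+1) * sA K (M+1) = kA K := by
    rw [← e1]
    rw [Finset.sum_range_succ, show sA K (K+1) = 0 from sA_vanish (by omega), mul_zero, add_zero]
    rw [Finset.sum_range_succ' (fun m => wfact m * sA K m)]
    rw [show sA K 0 = 0 by rw [sA_zero, if_neg (by omega : ¬ K = 0)], mul_zero, add_zero]
  rw [e1, e2]
  ring

lemma kB_rec (K : ℕ) (hK : 1 ≤ K) : kB (K+1) = 0 := by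
  have main : ((K:ℚ)+1) * kB (K+1) = 0 := by
    rw [kB_eq_sum, Finset.mul_sum]
    rw [Finset.sum_range_succ' (fun m => ((K:ℚ)+1) * (wlog m * sB (K+1) m))]
    rw [show sB (K+1) 0 = 0 by rw [sB_zero]; simp, mul_zero, mul_zero, add_zero]
    have step : ∀ M, ((K:ℚ)+1) * (wlog (M+1) * sB (K+1) (M+1))
        = (-1:ℚ)^M * sB K (M+1) + (-1:ℚ)^M * sB K M := by
      intro M
      have h := sB_rec K M
      have hw : wlog (M+1) * ((M:ℚ)+1) = (-1:ℚ)^M := by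
        rw [wlog]
        have : ((M+1 : ℕ) : ℚ) ≠ 0 := by push_cast; positivity
        push_cast
        field_simp
        ring
      calc ((K:ℚ)+1) * (wlog (M+1) * sB (K+1) (M+1))
          = wlog (M+1) * (((K:ℚ)+1) * sB (K+1) (M+1)) := by ring
        _ = wlog (M+1) * (((M:ℚ)+1) * (sB K (M+1) + sB K M)) := by rw [h]
        _ = (wlog (M+1) * ((M:ℚ)+1)) * (sB K (M+1) + sB K M) := by ring
        _ = (-1:ℚ)^M * sB K (M+1) + (-1:ℚ)^M * sB K M := by rw [hw]; ring
    rw [Finset.sum_congr rfl fun M _ => step M, Finset.sum_add_distrib]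
    have e1 : ∑ M ∈ Finset.range (K+1), (-1:ℚ)^M * sB K (M+1)
        = ∑ M ∈ Finset.range K, (-1:ℚ)^M * sB K (M+1) := by
      rw [Finset.sum_range_succ, show sB K (K+1) = 0 from sB_vanish (by omega), mul_zero,
        add_zero]
    have e2 : ∑ M ∈ Finset.range (K+1), (-1:ℚ)^M * sB K M
        = - ∑ M ∈ Finset.range K, (-1:ℚ)^M * sB K (M+1) := by
      rw [Finset.sum_range_succ' (fun M => (-1:ℚ)^M * sB K M)]
      rw [show sB K 0 = 0 by rw [sB_zero, if_neg (by omega : ¬ K = 0)], mul_zero, add_zero]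
      rw [← Finset.sum_neg_distrib]
      refine Finset.sum_congr rfl fun M _ => ?_
      rw [pow_succ]
      ring
    rw [e1, e2]
    ring
  have hne : ((K:ℚ)+1) ≠ 0 := by positivity
  exact (mul_eq_zero.1 main).resolve_left hne

lemma kA_val (k : ℕ) (hk : 1 ≤ k) : kA k = if k = 1 then 1 else 0 := by
  induction k with
  | zero => omega
  | succ K ih =>
    rcases Nat.eq_or_lt_of_le hk with h | h
    · rw [← h]; simp [kA_one]
    · have hK : 1 ≤ K := by omega
      have hrec := kA_rec K hK
      have ihv := ih hK
      have hne : ((K:ℚ)+1) ≠ 0 := by positivity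
      have : kA (K+1) = (1 - (K:ℚ)) * kA K / ((K:ℚ)+1) := by
        field_simp at hrec ⊢
        linarith [hrec]
      rw [this, ihv]
      rcases Nat.eq_or_lt_of_le hK with h1 | h1
      · rw [← h1]; norm_num
      · have : K ≠ 1 := by omega
        simp only [this, if_false, mul_zero, zero_div]
        have : K + 1 ≠ 1 := by omega
        simp [this]; omega

lemma kB_val (k : ℕ) (hk : 1 ≤ k) : kB k = if k = 1 then 1 else 0 := by
  rcases k with _ | K
  · omega
  rcases Nat.eq_zero_or_pos K with h | h
  · subst h; simp [kB_one]
  · rw [kB_rec K h]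
    have : K + 1 ≠ 1 := by omega
    simp [this]; omega

/-! ### Main objects -/

lemma csum_congr_pos {B : Type u} [Ring B] [Algebra ℚ B] (w : ℕ → ℚ) {g g' : ℕ → B}
    (h : ∀ j, 0 < j → g j = g' j) (n : ℕ) : csum w g n = csum w g' n := by
  refine Finset.sum_congr rfl fun c _ => ?_
  congr 1
  exact congrArg List.prod (List.map_congr_left fun x hx => h x (c.blocks_pos hx))

noncomputable def P (n : ℕ) : LieHopfQ :=
  ∑ c : Composition n, ((c.length.factorial : ℚ))⁻¹ • (c.blocks.map U).prod

noncomputable def Qz (n : ℕ) : NSymmQ :=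
  ∑ c : Composition n, ((-1 : ℚ) ^ (c.length + 1) / c.length) • (c.blocks.map Z).prod

lemma P_eq_csum (n : ℕ) : P n = csum wfact U n := rfl
lemma Qz_eq_csum (n : ℕ) : Qz n = csum wlog Z n := rfl

lemma P_zero : P 0 = 1 := by
  rw [P, Fintype.sum_unique]
  have h1 : (default : Composition 0).length = 0 := by
    simp [Composition.length, comp_zero_blocks]
  rw [Composition.length, comp_zero_blocks]
  simp

lemma Qz_zero : Qz 0 = 0 := by
  rw [Qz, Fintype.sum_unique]
  have h1 : (default : Composition 0).length = 0 := by
    simp [Composition.length, comp_zero_blocks]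
  rw [Composition.length, comp_zero_blocks]
  simp

noncomputable def phi : NSymmQ →ₐ[ℚ] LieHopfQ := FreeAlgebra.lift ℚ fun n => P (n+1)
noncomputable def psi : LieHopfQ →ₐ[ℚ] NSymmQ := FreeAlgebra.lift ℚ fun n => Qz (n+1)

lemma phi_Z (j : ℕ) : phi (Z j) = P j := by
  cases j with
  | zero => rw [show Z 0 = 1 from rfl, map_one, P_zero]
  | succ n => rw [show Z (n+1) = FreeAlgebra.ι ℚ n from rfl, phi, FreeAlgebra.lift_ι_apply]

lemma psi_U (j : ℕ) : psi (U j) = Qz j := by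
  cases j with
  | zero => rw [show U 0 = 0 from rfl, map_zero, Qz_zero]
  | succ n => rw [show U (n+1) = FreeAlgebra.ι ℚ n from rfl, psi, FreeAlgebra.lift_ι_apply]

/-- algebra maps commute with `csum` -/
lemma map_csum {B C : Type u} [Ring B] [Algebra ℚ B] [Ring C] [Algebra ℚ C]
    (f : B →ₐ[ℚ] C) (w : ℕ → ℚ) (g : ℕ → B) (n : ℕ) :
    f (csum w g n) = csum w (fun j => f (g j)) n := by
  rw [csum, map_sum, csum]
  refine Finset.sum_congr rfl fun c _ => ?_
  rw [map_smul, map_list_prod, List.map_map]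
  rfl

lemma sum_indicator_single {B : Type u} [Ring B] [Algebra ℚ B] (g : ℕ → B) (n : ℕ) (hn : 0 < n) :
    (∑ a : Composition n, (if a.length = 1 then (1:ℚ) else 0) • (a.blocks.map g).prod) = g n := by
  rw [Finset.sum_eq_single (Composition.single n hn)]
  · rw [Composition.single_length, if_pos rfl, one_smul, Composition.single_blocks]
    simp
  · intro a _ ha
    have : a.length ≠ 1 := fun h => ha ((Composition.eq_single_iff_length hn).2 h)
    rw [if_neg this, zero_smul]
  · intro h; exact absurd (Finset.mem_univ _) h

lemma psi_phi_gen (n : ℕ) : psi (phi (FreeAlgebra.ι ℚ n)) = FreeAlgebra.ι ℚ n := by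
  have h1 : phi (FreeAlgebra.ι ℚ n) = P (n+1) := by rw [phi, FreeAlgebra.lift_ι_apply]
  rw [h1, P_eq_csum, map_csum psi wfact U (n+1)]
  rw [show (fun j => psi (U j)) = fun j => csum wlog Z j by
    funext j; rw [psi_U, Qz_eq_csum]]
  rw [csum_csum wfact wlog Z (n+1)]
  have : ∀ a : Composition (n+1), a ∈ (Finset.univ : Finset (Composition (n+1))) →
      (csum wfact wlog a.length) • ((a.blocks.map Z).prod)
        = (if a.length = 1 then (1:ℚ) else 0) • (a.blocks.map Z).prod := by
    intro a _
    congr 1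
    have := kA_val a.length (a.length_pos_of_pos (by omega))
    rw [← kA]
    exact this
  rw [Finset.sum_congr rfl this, sum_indicator_single Z (n+1) (by omega)]
  rfl

lemma phi_psi_gen (n : ℕ) : phi (psi (FreeAlgebra.ι ℚ n)) = FreeAlgebra.ι ℚ n := by
  have h1 : psi (FreeAlgebra.ι ℚ n) = Qz (n+1) := by rw [psi, FreeAlgebra.lift_ι_apply]
  rw [h1, Qz_eq_csum, map_csum phi wlog Z (n+1)]
  rw [show (fun j => phi (Z j)) = fun j => csum wfact U j by
    funext j; rw [phi_Z, P_eq_csum]]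
  rw [csum_csum wlog wfact U (n+1)]
  have : ∀ a : Composition (n+1), a ∈ (Finset.univ : Finset (Composition (n+1))) →
      (csum wlog wfact a.length) • ((a.blocks.map U).prod)
        = (if a.length = 1 then (1:ℚ) else 0) • (a.blocks.map U).prod := by
    intro a _
    congr 1
    rw [csum_congr_pos wlog (g' := vexp) (fun j hj => by
      simp [wfact, vexp, Nat.pos_iff_ne_zero.1 hj]) a.length]
    have := kB_val a.length (a.length_pos_of_pos (by omega))
    rw [← kB]
    exact this
  rw [Finset.sum_congr rfl this, sum_indicator_single U (n+1) (by omega)]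
  rfl

/-! ### Coproduct -/

noncomputable def uS : PowerSeries LieHopfQ := PowerSeries.mk U

lemma coeff_uS_pow_vanish {k m : ℕ} (h : k < m) :
    PowerSeries.coeff (R := LieHopfQ) k (uS ^ m) = 0 := by
  rw [uS, ← lsum_eq_coeff_pow U rfl]
  exact lsum_eq_zero_of_lt U h

lemma P_eq_coeff_sum {N n : ℕ} (h : n ≤ N) :
    P n = ∑ m ∈ Finset.range (N+1), wfact m • PowerSeries.coeff (R := LieHopfQ) n (uS ^ m) := by
  rw [P_eq_csum, csum_eq_sum_lsum]
  rw [Finset.sum_congr rfl fun m _ => by rw [lsum_eq_coeff_pow U rfl n m]]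
  apply Finset.sum_subset (Finset.range_subset_range.2 (by omega))
  intro m _ hm
  rw [show PowerSeries.mk U = uS from rfl,
    coeff_uS_pow_vanish (by simp at hm ⊢; omega), smul_zero]

noncomputable def aS : PowerSeries (LieHopfQ ⊗[ℚ] LieHopfQ) :=
  PowerSeries.map (Algebra.TensorProduct.includeLeft :
    LieHopfQ →ₐ[ℚ] LieHopfQ ⊗[ℚ] LieHopfQ).toRingHom uS

noncomputable def bS : PowerSeries (LieHopfQ ⊗[ℚ] LieHopfQ) :=
  PowerSeries.map (Algebra.TensorProduct.includeRight :
    LieHopfQ →ₐ[ℚ] LieHopfQ ⊗[ℚ] LieHopfQ).toRingHom uS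

lemma coeff_aS_pow (p k : ℕ) :
    PowerSeries.coeff k (aS ^ p) = (PowerSeries.coeff (R := LieHopfQ) k (uS ^ p)) ⊗ₜ[ℚ] 1 := by
  rw [aS, ← map_pow, PowerSeries.coeff_map]
  rcases Algebra.TensorProduct.includeLeft_apply (R := ℚ) (S := ℚ)
    (A := LieHopfQ) (B := LieHopfQ) ((PowerSeries.coeff (R := LieHopfQ) k) (uS ^ p)) with h
  exact h

lemma coeff_bS_pow (q k : ℕ) :
    PowerSeries.coeff k (bS ^ q) = 1 ⊗ₜ[ℚ] (PowerSeries.coeff (R := LieHopfQ) k (uS ^ q)) := by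
  rw [bS, ← map_pow, PowerSeries.coeff_map]
  exact Algebra.TensorProduct.includeRight_apply _

lemma muL_U (j : ℕ) : muL (U j) = U j ⊗ₜ[ℚ] 1 + 1 ⊗ₜ[ℚ] U j := by
  cases j with
  | zero => rw [show U 0 = 0 from rfl, map_zero]; simp
  | succ n => rw [show U (n+1) = FreeAlgebra.ι ℚ n from rfl, muL, FreeAlgebra.lift_ι_apply]

lemma map_muL_uS : PowerSeries.map muL.toRingHom uS = aS + bS := by
  ext n
  rw [PowerSeries.coeff_map, map_add, uS, PowerSeries.coeff_mk]
  rw [show (PowerSeries.coeff n) aS = U n ⊗ₜ[ℚ] 1 by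
    have := coeff_aS_pow 1 n; rwa [pow_one, pow_one, uS, PowerSeries.coeff_mk] at this]
  rw [show (PowerSeries.coeff n) bS = 1 ⊗ₜ[ℚ] U n by
    have := coeff_bS_pow 1 n; rwa [pow_one, pow_one, uS, PowerSeries.coeff_mk] at this]
  exact muL_U n

lemma coeff_aS_bS (p q n : ℕ) :
    PowerSeries.coeff n (aS ^ p * bS ^ q)
      = ∑ k ∈ Finset.range (n+1),
          (PowerSeries.coeff (R := LieHopfQ) k (uS ^ p)) ⊗ₜ[ℚ]
            (PowerSeries.coeff (R := LieHopfQ) (n-k) (uS ^ q)) := by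
  rw [PowerSeries.coeff_mul, Finset.Nat.sum_antidiagonal_eq_sum_range_succ_mk]
  refine Finset.sum_congr rfl fun k _ => ?_
  rw [coeff_aS_pow, coeff_bS_pow, Algebra.TensorProduct.tmul_mul_tmul, one_mul, mul_one]

lemma coeff_aS (k : ℕ) : PowerSeries.coeff k aS = U k ⊗ₜ[ℚ] 1 := by
  have := coeff_aS_pow 1 k; rwa [pow_one, pow_one, uS, PowerSeries.coeff_mk] at this

lemma coeff_bS (k : ℕ) : PowerSeries.coeff k bS = 1 ⊗ₜ[ℚ] U k := by
  have := coeff_bS_pow 1 k; rwa [pow_one, pow_one, uS, PowerSeries.coeff_mk] at this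

lemma comm_aS_bS : aS * bS = bS * aS := by
  ext n
  rw [PowerSeries.coeff_mul, PowerSeries.coeff_mul,
    Finset.Nat.sum_antidiagonal_eq_sum_range_succ_mk,
    Finset.Nat.sum_antidiagonal_eq_sum_range_succ_mk]
  have h1 : ∀ k ∈ Finset.range (n+1),
      (PowerSeries.coeff k) aS * (PowerSeries.coeff (n-k)) bS
        = U k ⊗ₜ[ℚ] U (n - k) := by
    intro k _
    rw [coeff_aS, coeff_bS, Algebra.TensorProduct.tmul_mul_tmul, one_mul, mul_one]
  have h2 : ∀ k ∈ Finset.range (n+1),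
      (PowerSeries.coeff k) bS * (PowerSeries.coeff (n-k)) aS
        = U (n - k) ⊗ₜ[ℚ] U k := by
    intro k _
    rw [coeff_aS, coeff_bS, Algebra.TensorProduct.tmul_mul_tmul, one_mul, mul_one]
  rw [Finset.sum_congr rfl h1, Finset.sum_congr rfl h2]
  rw [← Finset.sum_range_reflect (fun k => U (n - k) ⊗ₜ[ℚ] U k) (n+1)]
  refine Finset.sum_congr rfl fun k hk => ?_
  have hk' : k ≤ n := by simp at hk; omega
  have e1 : n + 1 - 1 - k = n - k := by omega
  have e2 : n - (n - k) = k := by omega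
  rw [e1, e2]

lemma aS_bS_vanish {p q n : ℕ} (h : n < p + q) :
    PowerSeries.coeff n (aS ^ p * bS ^ q) = 0 := by
  rw [coeff_aS_bS]
  apply Finset.sum_eq_zero
  intro k hk
  have hk' : k ≤ n := by simp at hk; omega
  by_cases hkp : k < p
  · rw [coeff_uS_pow_vanish hkp, TensorProduct.zero_tmul]
  · rw [coeff_uS_pow_vanish (show n - k < q by omega), TensorProduct.tmul_zero]

lemma triangle_sum {M : Type*} [AddCommMonoid M] (N : ℕ) (F : ℕ → ℕ → M) :
    ∑ m ∈ Finset.range (N+1), ∑ p ∈ Finset.range (m+1), F p (m - p)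
      = ∑ p ∈ Finset.range (N+1), ∑ q ∈ Finset.range (N+1-p), F p q := by
  rw [Finset.sum_sigma', Finset.sum_sigma']
  apply Finset.sum_nbij' (i := fun x => (⟨x.2, x.1 - x.2⟩ : Σ _ : ℕ, ℕ))
    (j := fun x => (⟨x.1 + x.2, x.1⟩ : Σ _ : ℕ, ℕ))
  · intro x hx
    simp only [Finset.mem_sigma, Finset.mem_range] at hx ⊢
    omega
  · intro x hx
    simp only [Finset.mem_sigma, Finset.mem_range] at hx ⊢
    omega
  · intro x hx
    simp only [Finset.mem_sigma, Finset.mem_range] at hx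
    refine Sigma.ext ?_ ?_ <;> simp <;> omega
  · intro x hx
    simp only [Finset.mem_sigma, Finset.mem_range] at hx
    refine Sigma.ext ?_ ?_ <;> simp <;> omega
  · intro x hx
    rfl

lemma wfact_choose {p m : ℕ} (h : p ≤ m) :
    wfact m * (m.choose p : ℚ) = wfact p * wfact (m - p) := by
  have key := Nat.choose_mul_factorial_mul_factorial h
  have h1 : (p.factorial : ℚ) ≠ 0 := Nat.cast_ne_zero.2 (Nat.factorial_ne_zero _)
  have h2 : ((m-p).factorial : ℚ) ≠ 0 := Nat.cast_ne_zero.2 (Nat.factorial_ne_zero _)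
  have h3 : (m.factorial : ℚ) ≠ 0 := Nat.cast_ne_zero.2 (Nat.factorial_ne_zero _)
  have key' : (m.choose p : ℚ) * p.factorial * (m-p).factorial = m.factorial := by
    exact_mod_cast congrArg (Nat.cast : ℕ → ℚ) key
  rw [wfact, wfact, wfact]
  field_simp
  linarith [key']

lemma muL_P (n : ℕ) :
    muL (P n) = ∑ i ∈ Finset.range (n+1), P i ⊗ₜ[ℚ] P (n - i) := by
  -- LHS
  have lhs1 : muL (P n) = ∑ m ∈ Finset.range (n+1),
      wfact m • PowerSeries.coeff n ((aS + bS) ^ m) := by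
    rw [P_eq_coeff_sum (le_refl n), map_sum]
    refine Finset.sum_congr rfl fun m _ => ?_
    rw [map_smul]
    congr 1
    rw [show muL (PowerSeries.coeff (R := LieHopfQ) n (uS ^ m))
        = PowerSeries.coeff n (PowerSeries.map muL.toRingHom (uS ^ m)) by
      rw [PowerSeries.coeff_map]; rfl]
    rw [map_pow, map_muL_uS]
  have hcomm : Commute aS bS := comm_aS_bS
  have lhs2 : muL (P n) = ∑ m ∈ Finset.range (n+1), ∑ p ∈ Finset.range (m+1),
      (wfact p * wfact (m - p)) • PowerSeries.coeff n (aS ^ p * bS ^ (m-p)) := by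
    rw [lhs1]
    refine Finset.sum_congr rfl fun m hm => ?_
    rw [Commute.add_pow hcomm, map_sum, Finset.smul_sum]
    refine Finset.sum_congr rfl fun p hp => ?_
    have hpm : p ≤ m := by simp at hp; omega
    have hterm : aS ^ p * bS ^ (m-p) * ((m.choose p : ℕ) : PowerSeries (LieHopfQ ⊗[ℚ] LieHopfQ))
        = (m.choose p : ℕ) • (aS ^ p * bS ^ (m-p)) := by
      rw [nsmul_eq_mul]
      exact ((Nat.cast_commute (m.choose p) (aS ^ p * bS ^ (m-p))).eq).symm
    rw [hterm, map_nsmul, ← Nat.cast_smul_eq_nsmul ℚ, smul_smul, wfact_choose hpm]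
  have lhs3 : muL (P n) = ∑ p ∈ Finset.range (n+1), ∑ q ∈ Finset.range (n+1),
      (wfact p * wfact q) • PowerSeries.coeff n (aS ^ p * bS ^ q) := by
    rw [lhs2, triangle_sum n (fun p q => (wfact p * wfact q) • PowerSeries.coeff n (aS ^ p * bS ^ q))]
    refine Finset.sum_congr rfl fun p hp => ?_
    apply Finset.sum_subset (Finset.range_subset_range.2 (by omega))
    intro q _ hq
    have hpq : n < p + q := by
      simp only [Finset.mem_range] at hp hq ⊢
      omega
    rw [aS_bS_vanish hpq, smul_zero]
  -- RHS
  have rhs1 : ∀ i ∈ Finset.range (n+1), P i ⊗ₜ[ℚ] P (n - i)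
      = ∑ p ∈ Finset.range (n+1), ∑ q ∈ Finset.range (n+1),
          (wfact p * wfact q) •
            ((PowerSeries.coeff (R := LieHopfQ) i (uS ^ p)) ⊗ₜ[ℚ]
              (PowerSeries.coeff (R := LieHopfQ) (n-i) (uS ^ q))) := by
    intro i hi
    have hi' : i ≤ n := by simp at hi; omega
    rw [P_eq_coeff_sum hi', P_eq_coeff_sum (show n - i ≤ n by omega)]
    rw [TensorProduct.sum_tmul]
    refine Finset.sum_congr rfl fun p _ => ?_
    rw [TensorProduct.tmul_sum]
    refine Finset.sum_congr rfl fun q _ => ?_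
    rw [TensorProduct.tmul_smul, TensorProduct.smul_tmul', TensorProduct.smul_tmul',
      smul_smul, mul_comm (wfact q) (wfact p)]
  rw [lhs3, Finset.sum_congr rfl rhs1]
  have expand : ∀ p q : ℕ,
      (wfact p * wfact q) • PowerSeries.coeff n (aS ^ p * bS ^ q)
        = ∑ k ∈ Finset.range (n+1), (wfact p * wfact q) •
            ((PowerSeries.coeff (R := LieHopfQ) k (uS ^ p)) ⊗ₜ[ℚ]
              (PowerSeries.coeff (R := LieHopfQ) (n-k) (uS ^ q))) := by
    intro p q
    rw [coeff_aS_bS, Finset.smul_sum]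
  rw [Finset.sum_congr rfl (fun p (_ : p ∈ Finset.range (n+1)) => Finset.sum_congr rfl
    (fun q (_ : q ∈ Finset.range (n+1)) => expand p q))]
  rw [Finset.sum_congr rfl (fun p (_ : p ∈ Finset.range (n+1)) =>
    Finset.sum_comm (s := Finset.range (n+1)) (t := Finset.range (n+1)))]
  exact Finset.sum_comm

/-! ### Counit -/

lemma epsL_U (j : ℕ) : epsL (U j) = 0 := by
  cases j with
  | zero => rw [show U 0 = 0 from rfl, map_zero]
  | succ n => rw [show U (n+1) = FreeAlgebra.ι ℚ n from rfl, epsL, FreeAlgebra.lift_ι_apply]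

lemma epsL_P (n : ℕ) (hn : 1 ≤ n) : epsL (P n) = 0 := by
  rw [P_eq_csum, map_csum epsL wfact U n]
  rw [show (fun j => epsL (U j)) = fun _ => (0:ℚ) by funext j; exact epsL_U j]
  rw [csum]
  apply Finset.sum_eq_zero
  intro c _
  have hne : c.blocks ≠ [] := by
    intro h
    have := c.blocks_sum
    rw [h] at this
    simp at this
    omega
  rcases List.exists_cons_of_ne_nil hne with ⟨b, t, hbt⟩
  rw [hbt]
  simp

/-! ### Assembly -/

lemma psi_phi : psi.comp phi = AlgHom.id ℚ NSymmQ := by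
  apply FreeAlgebra.hom_ext
  funext n
  show psi (phi (FreeAlgebra.ι ℚ n)) = FreeAlgebra.ι ℚ n
  exact psi_phi_gen n

lemma phi_psi : phi.comp psi = AlgHom.id ℚ LieHopfQ := by
  apply FreeAlgebra.hom_ext
  funext n
  show phi (psi (FreeAlgebra.ι ℚ n)) = FreeAlgebra.ι ℚ n
  exact phi_psi_gen n

noncomputable def phiEquiv : NSymmQ ≃ₐ[ℚ] LieHopfQ :=
  AlgEquiv.ofAlgHom phi psi phi_psi psi_phi

lemma phiEquiv_apply (x : NSymmQ) : phiEquiv x = phi x := rfl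
lemma phiEquiv_symm_apply (x : LieHopfQ) : phiEquiv.symm x = psi x := rfl

lemma comul_compat : ∀ x : NSymmQ,
    muL (phiEquiv x)
      = Algebra.TensorProduct.map phiEquiv.toAlgHom phiEquiv.toAlgHom (muN x) := by
  have hF : muL.comp phi
      = (Algebra.TensorProduct.map phiEquiv.toAlgHom phiEquiv.toAlgHom).comp muN := by
    apply FreeAlgebra.hom_ext
    funext n
    show muL (phi (FreeAlgebra.ι ℚ n))
      = Algebra.TensorProduct.map phiEquiv.toAlgHom phiEquiv.toAlgHom (muN (FreeAlgebra.ι ℚ n))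
    rw [show phi (FreeAlgebra.ι ℚ n) = P (n+1) by rw [phi, FreeAlgebra.lift_ι_apply]]
    rw [muL_P (n+1)]
    rw [show muN (FreeAlgebra.ι ℚ n)
        = ∑ i ∈ Finset.range (n + 2), Z i ⊗ₜ[ℚ] Z (n + 1 - i) by
      rw [muN, FreeAlgebra.lift_ι_apply]]
    rw [map_sum]
    refine Finset.sum_congr rfl fun i _ => ?_
    rw [Algebra.TensorProduct.map_tmul]
    show P i ⊗ₜ[ℚ] P (n + 1 - i) = phi (Z i) ⊗ₜ[ℚ] phi (Z (n + 1 - i))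
    rw [phi_Z, phi_Z]
  intro x
  exact DFunLike.congr_fun hF x

lemma counit_compat : ∀ x : NSymmQ, epsL (phiEquiv x) = epsN x := by
  have hF : epsL.comp phi = epsN := by
    apply FreeAlgebra.hom_ext
    funext n
    show epsL (phi (FreeAlgebra.ι ℚ n)) = epsN (FreeAlgebra.ι ℚ n)
    rw [show phi (FreeAlgebra.ι ℚ n) = P (n+1) by rw [phi, FreeAlgebra.lift_ι_apply]]
    rw [epsL_P (n+1) (by omega), epsN, FreeAlgebra.lift_ι_apply]
  intro x
  exact DFunLike.congr_fun hF x

end Stmt13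

/-- The assignment `Z_n ↦ Σ U_{r_1} ⋯ U_{r_m}/m!` (sum over compositions of `n`) defines an
isomorphism of bialgebras `NSymm ⊗ ℚ ≃ LieHopf ⊗ ℚ`, with inverse
`U_n ↦ Σ (-1)^{m+1} Z_{r_1} ⋯ Z_{r_m}/m`. -/
theorem stmt_13 :
    ∃ φ : NSymmQ ≃ₐ[ℚ] LieHopfQ,
      (∀ n : ℕ, 1 ≤ n →
        φ (Z n) = ∑ c : Composition n,
          ((c.length.factorial : ℚ))⁻¹ • (c.blocks.map U).prod) ∧
      (∀ n : ℕ, 1 ≤ n →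
        φ.symm (U n) = ∑ c : Composition n,
          ((-1 : ℚ) ^ (c.length + 1) / c.length) • (c.blocks.map Z).prod) ∧
      (∀ x : NSymmQ,
        muL (φ x) = Algebra.TensorProduct.map φ.toAlgHom φ.toAlgHom (muN x)) ∧
      (∀ x : NSymmQ, epsL (φ x) = epsN x) := by
  refine ⟨Stmt13.phiEquiv, fun n _ => ?_, fun n _ => ?_, Stmt13.comul_compat,
    Stmt13.counit_compat⟩
  · rw [Stmt13.phiEquiv_apply, Stmt13.phi_Z]
    rfl
  · rw [Stmt13.phiEquiv_symm_apply, Stmt13.psi_U]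
    rfl
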